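/- Let X be a compact Hausdorff space, A a commutative unital complex Banach algebra, and f : X → A continuous. Then the vector-valued spectrum of f is closed in C(X, ℂ) with the uniform norm: if λ ∈ C(X) is a uniform limit of functions of the form φₙ ∘ f with φₙ characters of A, then λ = φ ∘ f for some character φ of A. -/

import Mathlib

open WeakDual

/-- The vector-valued spectrum of a continuous `f : X → A` is uniformly closed:
a uniform limit of functions `φₙ ∘ f` (with `φₙ` characters of `A`) is of the form `φ ∘ f`
for some character `φ`. -/
theorem spectrum_isClosed
    {X : Type*} [TopologicalSpace X] [CompactSpace X] [T2Space X]
    {A : Type*} [NormedCommRing A] [NormedAlgebra ℂ A] [CompleteSpace A]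
    (f : C(X, A)) (lam : X → ℂ) (hlam : Continuous lam)
    (φs : ℕ → characterSpace ℂ A)
    (hconv : TendstoUniformly (fun n x => φs n (f x)) lam Filter.atTop) :
    ∃ φ : characterSpace ℂ A, ∀ x : X, lam x = φ (f x) := by
  obtain ⟨φ, hφ⟩ := exists_clusterPt_of_compactSpace (Filter.map φs Filter.atTop)
  refine ⟨φ, fun x => ?_⟩
  -- evaluation at f x is continuous on the character space
  have hev : Continuous fun ψ : characterSpace ℂ A => ψ (f x) :=
    (WeakDual.eval_continuous (f x)).comp continuous_subtype_val
  -- hence φ (f x) is a cluster point of n ↦ φs n (f x)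
  have hcp : ClusterPt (φ (f x)) (Filter.map (fun n => φs n (f x)) Filter.atTop) := by
    have := hφ.map (hev.tendsto φ) (Filter.Tendsto.mono_left
      (Filter.tendsto_map' Filter.tendsto_map) le_rfl)
    simpa [Filter.map_map, Function.comp_def] using this
  -- pointwise convergence to lam x
  have hpt : Filter.Tendsto (fun n => φs n (f x)) Filter.atTop (nhds (lam x)) :=
    hconv.tendsto_at x
  haveI : (Filter.map (fun n => φs n (f x)) Filter.atTop).NeBot := Filter.map_neBot
  exact (eq_of_nhds_neBot (hcp.mono hpt)).symm
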